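/- Let n ∈ ℕ, let a ∈ Matrix (Fin n) (Fin n) ℝ, and let K be an invertible lower unitriangular n×n real matrix (K i i = 1 and K i j = 0 for i < j). Suppose g, L₋, L₊ : ℝ → Matrix (Fin n) (Fin n) ℝ are functions differentiable at 0 such that for all t: g(t)·K = L₋(t)·L₊(t), L₋(t) is lower unitriangular, and L₊(t) is upper triangular; and suppose g(0) = 1 (the identity matrix), g′(0) = −a, and L₋(0) = K. Then L₋′(0) = −K · P₋(K⁻¹ a K), where P₋(M) denotes the strictly lower triangular part of M (P₋(M) i j = M i j if j < i and 0 otherwise). -/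

import Mathlib

open Matrix

/-- Matrix form of the lemma `K⁻¹ 𝓛ₐ K = -(K⁻¹ a K)₋`: if `g(t)·K = L₋(t)·L₊(t)`
with `L₋` lower unitriangular and `L₊` upper triangular, `g(0) = 1`, `g′(0) = -a`,
`L₋(0) = K`, then `L₋′(0) = -K · P₋(K⁻¹ a K)` where `P₋` is the strictly lower
triangular part. -/
theorem infinitesimal_action_on_unipotent_group
    (n : ℕ) (a K : Matrix (Fin n) (Fin n) ℝ)
    (hKunit : IsUnit K)
    (hKdiag : ∀ i, K i i = 1) (hKupper : ∀ i j : Fin n, i < j → K i j = 0)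
    (g Lm Lp : ℝ → Matrix (Fin n) (Fin n) ℝ)
    (Lm' : Matrix (Fin n) (Fin n) ℝ)
    (hg' : ∀ i j, HasDerivAt (fun t => g t i j) (-a i j) 0)
    (hLm' : ∀ i j, HasDerivAt (fun t => Lm t i j) (Lm' i j) 0)
    (hLp' : ∀ i j, DifferentiableAt ℝ (fun t => Lp t i j) 0)
    (hfact : ∀ t, g t * K = Lm t * Lp t)
    (hLmdiag : ∀ t i, Lm t i i = 1)
    (hLmupper : ∀ t, ∀ i j : Fin n, i < j → Lm t i j = 0)
    (hLplower : ∀ t, ∀ i j : Fin n, j < i → Lp t i j = 0)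
    (hg0 : g 0 = 1) (hLm0 : Lm 0 = K) :
    Lm' = -(K * Matrix.of fun i j : Fin n =>
      if j < i then (K⁻¹ * a * K) i j else 0) := by
  have hdet : IsUnit K.det := (Matrix.isUnit_iff_isUnit_det K).mp hKunit
  haveI : Invertible K := K.invertibleOfIsUnitDet hdet
  -- Lp 0 = 1
  have hLp0 : Lp 0 = 1 := by
    have h := hfact 0
    rw [hg0, hLm0, one_mul] at h
    have := congrArg (fun M => K⁻¹ * M) h
    simpa [← Matrix.mul_assoc, Matrix.inv_mul_of_invertible K, eq_comm] using this
  -- derivative of Lp entrywise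
  set D : Matrix (Fin n) (Fin n) ℝ := Matrix.of fun i j => deriv (fun t => Lp t i j) 0 with hD
  have hDderiv : ∀ i j, HasDerivAt (fun t => Lp t i j) (D i j) 0 := fun i j =>
    (hLp' i j).hasDerivAt
  have hDlow : ∀ i j : Fin n, j < i → D i j = 0 := by
    intro i j hij
    have : (fun t => Lp t i j) = fun _ => (0 : ℝ) := funext fun t => hLplower t i j hij
    simp [hD, Matrix.of_apply, this]
  -- Lm' strictly lower
  have hLm'diag : ∀ i, Lm' i i = 0 := by
    intro i
    have h1 : (fun t => Lm t i i) = fun _ => (1 : ℝ) := funext fun t => hLmdiag t i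
    have := hLm' i i
    rw [h1] at this
    exact this.unique (hasDerivAt_const 0 1)
  have hLm'upper : ∀ i j : Fin n, i < j → Lm' i j = 0 := by
    intro i j hij
    have h1 : (fun t => Lm t i j) = fun _ => (0 : ℝ) := funext fun t => hLmupper t i j hij
    have := hLm' i j
    rw [h1] at this
    exact this.unique (hasDerivAt_const 0 0)
  -- differentiate the factorization
  have key0 : -(a * K) = Lm' * Lp 0 + Lm 0 * D := by
    ext i j
    have hL : HasDerivAt (fun t => (g t * K) i j) (∑ k, -a i k * K k j) 0 := by
      simp only [Matrix.mul_apply]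
      exact HasDerivAt.fun_sum fun k _ => (hg' i k).mul_const _
    have hR : HasDerivAt (fun t => (Lm t * Lp t) i j)
        (∑ k, (Lm' i k * Lp 0 k j + Lm 0 i k * D k j)) 0 := by
      simp only [Matrix.mul_apply]
      exact HasDerivAt.fun_sum fun k _ => (hLm' i k).mul (hDderiv k j)
    have heq : (fun t => (g t * K) i j) = fun t => (Lm t * Lp t) i j :=
      funext fun t => by rw [hfact t]
    rw [heq] at hL
    have h := hL.unique hR
    simp only [Matrix.neg_apply, Matrix.add_apply, Matrix.mul_apply,
      Finset.sum_add_distrib, neg_mul] at h ⊢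
    rw [← h, Finset.sum_neg_distrib]
  have key : -(a * K) = Lm' + K * D := by rw [key0, hLp0, hLm0, mul_one]
  have key2 : Lm' = -(a * K) - K * D := by rw [key, add_sub_cancel_right]
  -- K⁻¹ is lower triangular
  have hKinv : ∀ i j : Fin n, i < j → K⁻¹ i j = 0 := by
    have hbt : K.BlockTriangular (OrderDual.toDual : Fin n → (Fin n)ᵒᵈ) := by
      intro i j h
      exact hKupper i j h
    have := Matrix.blockTriangular_inv_of_blockTriangular hbt
    intro i j hij
    exact this hij
  -- M = K⁻¹ * Lm'
  have hM : K⁻¹ * Lm' = -Matrix.of (fun i j : Fin n =>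
      if j < i then (K⁻¹ * a * K) i j else 0) := by
    ext i j
    rcases lt_or_ge j i with hij | hij
    · have : (K⁻¹ * Lm') i j = (K⁻¹ * (-(a * K) - K * D)) i j := by rw [← key2]
      rw [this]
      have : K⁻¹ * (-(a * K) - K * D) = -(K⁻¹ * a * K) - D := by
        rw [Matrix.mul_sub, ← Matrix.mul_assoc, Matrix.inv_mul_of_invertible K, one_mul,
          Matrix.mul_neg, Matrix.mul_assoc]
      rw [this]
      simp [hDlow i j hij, hij]
    · -- i ≤ j : entry is 0
      rw [Matrix.mul_apply]
      have hz : ∀ k ∈ Finset.univ, K⁻¹ i k * Lm' k j = 0 := by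
        intro k _
        rcases lt_or_ge i k with hik | hik
        · rw [hKinv i k hik, zero_mul]
        · have hkj : k ≤ j := hik.trans hij
          rcases hkj.lt_or_eq with h | h
          · rw [hLm'upper k j h, mul_zero]
          · subst h; rw [hLm'diag, mul_zero]
      rw [Finset.sum_eq_zero hz]
      simp [not_lt.mpr hij]
  have := congrArg (fun M => K * M) hM
  simp only [← Matrix.mul_assoc, Matrix.mul_inv_of_invertible, one_mul, Matrix.mul_neg] at this
  exact this
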